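/- Let k ≥ 1, c ≥ 2, m ≥ 1 be integers with m ≥ 3ck. Let w(R), w(S), w(F), δ ∈ ℚ_{≥0}^k (componentwise nonnegative vectors) and w(R'), and suppose componentwise: (1) w(R') ≥ w(S) − 2k·δ − (1/c)·(w(S) − w(F)), (2) δ ≤ w(F)/(3ck), (3) w(F) ≥ (3ck/m)·w(R), (4) w(S) ≥ (1 − 1/m)·w(R), and (5) w(F) ≤ w(S). Then w(R') ≥ (1 − 1/c)·w(R) componentwise. -/

import Mathlib

/-- Central estimation in the analysis of the multiobjective Max-TSP algorithm:
the losses from removing one edge per cycle are absorbed by the heavy fixed edges,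
yielding a `(1 - 1/c)`-approximation componentwise. -/
theorem tsp_estimation (k c m : ℕ) (hk : 1 ≤ k) (hc : 2 ≤ c) (hm : 1 ≤ m)
    (hmck : 3 * c * k ≤ m)
    (wR wS wF δ wR' : Fin k → ℚ)
    (hRnn : ∀ i, 0 ≤ wR i) (hSnn : ∀ i, 0 ≤ wS i) (hFnn : ∀ i, 0 ≤ wF i)
    (hδnn : ∀ i, 0 ≤ δ i)
    (h1 : ∀ i, wS i - 2 * (k : ℚ) * δ i - (1 / (c : ℚ)) * (wS i - wF i) ≤ wR' i)
    (h2 : ∀ i, δ i ≤ wF i / (3 * (c : ℚ) * (k : ℚ)))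
    (h3 : ∀ i, (3 * (c : ℚ) * (k : ℚ) / (m : ℚ)) * wR i ≤ wF i)
    (h4 : ∀ i, (1 - 1 / (m : ℚ)) * wR i ≤ wS i)
    (h5 : ∀ i, wF i ≤ wS i) :
    ∀ i, (1 - 1 / (c : ℚ)) * wR i ≤ wR' i := by
  intro i
  have hkQ : (1:ℚ) ≤ (k:ℚ) := by exact_mod_cast hk
  have hcQ : (2:ℚ) ≤ (c:ℚ) := by exact_mod_cast hc
  have hmQ : (1:ℚ) ≤ (m:ℚ) := by exact_mod_cast hm
  have hk0 : (0:ℚ) < (k:ℚ) := by linarith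
  have hc0 : (0:ℚ) < (c:ℚ) := by linarith
  have hm0 : (0:ℚ) < (m:ℚ) := by linarith
  set C := (c:ℚ); set K := (k:ℚ); set M := (m:ℚ)
  have hR := hRnn i; have hF := hFnn i
  have a1 : C * wS i - 2 * C * K * δ i - (wS i - wF i) ≤ C * wR' i := by
    have := mul_le_mul_of_nonneg_left (h1 i) hc0.le
    have hne : C ≠ 0 := hc0.ne'
    field_simp at this
    linarith
  have a2 : 3 * C * K * δ i ≤ wF i := by
    have := h2 i
    rw [le_div_iff₀ (by positivity)] at this
    linarith
  have a3 : 3 * C * K * wR i ≤ M * wF i := by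
    have := h3 i
    rw [div_mul_eq_mul_div, div_le_iff₀ hm0] at this
    linarith
  have a4 : (M - 1) * wR i ≤ M * wS i := by
    have := mul_le_mul_of_nonneg_left (h4 i) hm0.le
    have hne : M ≠ 0 := hm0.ne'
    field_simp at this
    linarith
  have hCM : (0:ℚ) < C * M := by positivity
  have heq : (1 - 1/C) * wR i = ((C-1) * M * wR i) / (C * M) := by
    field_simp
  rw [heq, div_le_iff₀ hCM]
  nlinarith [mul_le_mul_of_nonneg_left a1 hm0.le,
    mul_le_mul_of_nonneg_left a2 hm0.le,
    mul_le_mul_of_nonneg_left a4 (by linarith : (0:ℚ) ≤ C - 1),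
    mul_nonneg (mul_nonneg hc0.le (by linarith : (0:ℚ) ≤ K - 1)) hR]
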